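/- Let $(\Omega,\Sigma,\lambda)$ be a probability space, $A \in \Sigma$, $\eta \in (0,1)$, and let $f \in L_1(\lambda)$ be a complex-valued function such that $\int_A \mathrm{Re}\, f \, d\lambda = 0$, $\|f\|_1 \le 2\lambda(A)$, and the set $B = \{t : |f(t) - \chi_A(t)| \ge \eta\}$ has measure $\lambda(B) \le \eta$. Then $\int_{\Omega \setminus A} |f|\,d\lambda \le 2\eta + 2\eta\,\lambda(A)$. -/

import Mathlib

open MeasureTheory

theorem stmt2 {Ω : Type*} [MeasurableSpace Ω] (μ : Measure Ω) [IsProbabilityMeasure μ]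
    (A : Set Ω) (hA : MeasurableSet A) (η : ℝ) (hη0 : 0 < η) (hη1 : η < 1)
    (f : Ω → ℂ) (hf : Integrable f μ)
    (hRe : ∫ t in A, (f t).re ∂μ = 0)
    (hnorm : ∫ t, ‖f t‖ ∂μ ≤ 2 * (μ A).toReal)
    (hB : (μ {t | η ≤ ‖f t - A.indicator (fun _ => (1 : ℂ)) t‖}).toReal ≤ η) :
    ∫ t in Aᶜ, ‖f t‖ ∂μ ≤ 2 * η + 2 * η * (μ A).toReal := by
  -- pass to a strongly measurable representative g
  set g : Ω → ℂ := hf.aestronglyMeasurable.mk f with hgdef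
  have hgm : StronglyMeasurable g := hf.aestronglyMeasurable.stronglyMeasurable_mk
  have hfg : f =ᵐ[μ] g := hf.aestronglyMeasurable.ae_eq_mk
  have hg : Integrable g μ := hf.congr hfg
  set B : Set Ω := {t | η ≤ ‖g t - A.indicator (fun _ => (1 : ℂ)) t‖} with hBdef
  have hBm : MeasurableSet B := by
    have : Measurable fun t => ‖g t - A.indicator (fun _ => (1 : ℂ)) t‖ :=
      (hgm.measurable.sub (measurable_const.indicator hA)).norm
    exact measurableSet_le measurable_const this
  have hμB : (μ B).toReal ≤ η := by
    have heq : B =ᵐ[μ] {t | η ≤ ‖f t - A.indicator (fun _ => (1 : ℂ)) t‖} := by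
      rw [Filter.eventuallyEq_set]
      filter_upwards [hfg] with t ht
      simp [hBdef, Set.mem_setOf_eq, ht]
    rw [measure_congr heq]; exact hB
  have hfin : ∀ s : Set Ω, μ s ≠ ⊤ := fun s => (measure_lt_top μ s).ne
  set a := (μ A).toReal with hadef
  set b := (μ (A \ B)).toReal with hbdef
  have ha0 : 0 ≤ a := ENNReal.toReal_nonneg
  have hb0 : 0 ≤ b := ENNReal.toReal_nonneg
  -- b ≥ a - η
  have hab : a - η ≤ b := by
    have hsub : A ⊆ (A \ B) ∪ B := fun t ht => by
      by_cases htB : t ∈ B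
      · exact Or.inr htB
      · exact Or.inl ⟨ht, htB⟩
    have h1 : μ A ≤ μ (A \ B) + μ B := le_trans (measure_mono hsub) (measure_union_le _ _)
    have h2 : a ≤ b + (μ B).toReal := by
      rw [hadef, hbdef, ← ENNReal.toReal_add (hfin _) (hfin _)]
      exact ENNReal.toReal_mono (by simp [ENNReal.add_ne_top, hfin]) h1
    linarith
  -- on A \ B, Re g ≥ 1 - η
  have hpt : ∀ t ∈ A \ B, 1 - η ≤ (g t).re := by
    rintro t ⟨htA, htB⟩
    have h1 : ‖g t - A.indicator (fun _ => (1 : ℂ)) t‖ < η := lt_of_not_ge htB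
    rw [Set.indicator_of_mem htA] at h1
    have h2 : (1 - g t).re ≤ ‖(1 : ℂ) - g t‖ := Complex.re_le_norm _
    rw [norm_sub_rev] at h1
    simp only [Complex.sub_re, Complex.one_re] at h2
    linarith
  -- integrability pieces
  have hgre : Integrable (fun t => (g t).re) μ := hg.re
  have hgnorm : Integrable (fun t => ‖g t‖) μ := hg.norm
  -- lower bound for ∫_{A\B} Re g
  have hI1 : (1 - η) * b ≤ ∫ t in A \ B, (g t).re ∂μ := by
    have h := setIntegral_ge_of_const_le (hA.diff hBm) (hfin _) hpt hgre.integrableOn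
    rw [smul_eq_mul, mul_comm] at h
    exact h
  -- ∫_A Re g = 0
  have hReg : ∫ t in A, (g t).re ∂μ = 0 := by
    rw [← hRe]
    exact integral_congr_ae (ae_restrict_of_ae (hfg.mono fun t ht => by simp only [ht]))
  -- split
  have hsplit : ∫ t in A ∩ B, (g t).re ∂μ + ∫ t in A \ B, (g t).re ∂μ = 0 := by
    rw [integral_inter_add_diff hBm hgre.integrableOn, hReg]
  -- ∫_{A∩B} ‖g‖ ≥ -∫_{A∩B} Re g
  have h3 : - ∫ t in A ∩ B, (g t).re ∂μ ≤ ∫ t in A ∩ B, ‖g t‖ ∂μ := by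
    rw [← integral_neg]
    exact setIntegral_mono hgre.neg.integrableOn hgnorm.integrableOn
      (fun t => neg_le_of_neg_le (neg_le_of_abs_le (Complex.abs_re_le_norm _)))
  have h4 : ∫ t in A \ B, (g t).re ∂μ ≤ ∫ t in A \ B, ‖g t‖ ∂μ :=
    setIntegral_mono hgre.integrableOn hgnorm.integrableOn
      (fun t => Complex.re_le_norm _)
  have h5 : 2 * ((1 - η) * b) ≤ ∫ t in A, ‖g t‖ ∂μ := by
    rw [← integral_inter_add_diff hBm hgnorm.integrableOn]
    have := hsplit
    nlinarith [hI1, h3, h4]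
  -- norms of f and g agree
  have hnormeq : ∀ s : Set Ω, ∫ t in s, ‖f t‖ ∂μ = ∫ t in s, ‖g t‖ ∂μ := fun s =>
    integral_congr_ae (ae_restrict_of_ae (hfg.mono fun t ht => by simp only [ht]))
  have htot : ∫ t, ‖g t‖ ∂μ ≤ 2 * a := by
    rw [← integral_congr_ae (hfg.mono fun t ht => by simp only [ht] : (fun t => ‖f t‖) =ᵐ[μ] fun t => ‖g t‖)]
    exact hnorm
  have hcompl : ∫ t in A, ‖g t‖ ∂μ + ∫ t in Aᶜ, ‖g t‖ ∂μ = ∫ t, ‖g t‖ ∂μ :=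
    integral_add_compl hA hgnorm
  rw [hnormeq Aᶜ]
  nlinarith [h5, htot, hcompl, hab, hb0, ha0]
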